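/- arXiv:1906.03254 — 2 statements merged into one kernel-verified Lean document; each statement's English description precedes it below -/
import Mathlib

section
/- Let k ∈ ℝ and let h : ℝ² → ℝ be C³ on ℝ² \ {0} and positively homogeneous of degree k. Let v ≠ 0 with k · h(v) ≠ 0. Then for every X ∈ ℝ²: D³h(v)(X, X, X) = (6·K₃(h)(v)/(k·h(v))³) · ρ_v(X)³ + (6·(k − 2)·K₂(h)(v)/(k·h(v))³) · ρ_v(X)² · Dh(v)(X) + ((k − 1)(k − 2)/(k·h(v))²) · (Dh(v)(X))³. -/
open Filter

section EulerAux

open Filter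

variable {E : Type*} [NormedAddCommGroup E] [NormedSpace ℝ E]

theorem euler_aux {k : ℝ} {h : E → ℝ}
    (hd : ∀ x : E, x ≠ 0 → DifferentiableAt ℝ h x)
    (hhom : ∀ t : ℝ, 0 < t → ∀ x : E, x ≠ 0 → h (t • x) = t ^ k * h x)
    {x : E} (hx : x ≠ 0) : fderiv ℝ h x x = k * h x := by
  have h1 : HasDerivAt (fun t : ℝ => t • x) x 1 := by
    simpa using (hasDerivAt_id (1:ℝ)).smul_const x
  have hx1 : HasFDerivAt h (fderiv ℝ h x) ((fun t : ℝ => t • x) 1) := by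
    simpa using (hd x hx).hasFDerivAt
  have h2 : HasDerivAt (fun t : ℝ => h (t • x)) (fderiv ℝ h x x) 1 :=
    hx1.comp_hasDerivAt 1 h1
  have h3 : HasDerivAt (fun t : ℝ => t ^ k * h x) (fderiv ℝ h x x) 1 := by
    apply h2.congr_of_eventuallyEq
    filter_upwards [eventually_gt_nhds zero_lt_one] with t ht
    exact (hhom t ht x hx).symm
  have h4 : HasDerivAt (fun t : ℝ => t ^ k * h x) ((k * (1:ℝ) ^ (k-1)) * h x) 1 :=
    (Real.hasDerivAt_rpow_const (Or.inl one_ne_zero)).mul_const _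
  rw [h3.unique h4]
  simp [Real.one_rpow]

theorem euler2_aux {k : ℝ} {h : E → ℝ}
    (hf : ContDiffOn ℝ 3 h {x : E | x ≠ 0})
    (hhom : ∀ t : ℝ, 0 < t → ∀ x : E, x ≠ 0 → h (t • x) = t ^ k * h x)
    {x : E} (hx : x ≠ 0) (a : E) :
    fderiv ℝ (fderiv ℝ h) x a x = (k - 1) * fderiv ℝ h x a := by
  have hop : IsOpen {y : E | y ≠ 0} := isOpen_ne
  have hmem : {y : E | y ≠ 0} ∈ nhds x := hop.mem_nhds hx
  have hC : ContDiffAt ℝ 3 h x := (hf x hx).contDiffAt hmem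
  have hd1 : DifferentiableAt ℝ (fderiv ℝ h) x :=
    (hC.fderiv_right (m := 2) (by norm_num)).differentiableAt (by norm_num)
  have hd0 : DifferentiableAt ℝ h x := hC.differentiableAt (by norm_num)
  have hG : HasFDerivAt (fun y => fderiv ℝ h y y)
      ((fderiv ℝ h x).comp (ContinuousLinearMap.id ℝ E) +
        (fderiv ℝ (fderiv ℝ h) x).flip x) x :=
    hd1.hasFDerivAt.clm_apply (hasFDerivAt_id x)
  have hK : HasFDerivAt (fun y => k * h y) (k • fderiv ℝ h x) x :=
    hd0.hasFDerivAt.const_mul k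
  have hev : (fun y => k * h y) =ᶠ[nhds x] (fun y => fderiv ℝ h y y) := by
    filter_upwards [hmem] with y hy
    exact (euler_aux (fun z hz =>
      ((hf z hz).contDiffAt (hop.mem_nhds hz)).differentiableAt (by norm_num)) hhom hy).symm
  have heq := (hG.congr_of_eventuallyEq hev).unique hK
  have h5 := DFunLike.congr_fun heq a
  simp only [ContinuousLinearMap.add_apply, ContinuousLinearMap.coe_comp',
    Function.comp_apply, ContinuousLinearMap.coe_id', id_eq,
    ContinuousLinearMap.flip_apply, ContinuousLinearMap.smul_apply, smul_eq_mul] at h5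
  linarith

theorem euler3_aux {k : ℝ} {h : E → ℝ}
    (hf : ContDiffOn ℝ 3 h {x : E | x ≠ 0})
    (hhom : ∀ t : ℝ, 0 < t → ∀ x : E, x ≠ 0 → h (t • x) = t ^ k * h x)
    {v : E} (hv : v ≠ 0) (a b : E) :
    fderiv ℝ (fderiv ℝ (fderiv ℝ h)) v b a v + fderiv ℝ (fderiv ℝ h) v a b
      = (k - 1) * fderiv ℝ (fderiv ℝ h) v b a := by
  have hop : IsOpen {y : E | y ≠ 0} := isOpen_ne
  have hmem : {y : E | y ≠ 0} ∈ nhds v := hop.mem_nhds hv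
  have hC : ContDiffAt ℝ 3 h v := (hf v hv).contDiffAt hmem
  have hd2 : DifferentiableAt ℝ (fderiv ℝ (fderiv ℝ h)) v :=
    ((hC.fderiv_right (m := 2) (by norm_num)).fderiv_right (m := 1)
      (by norm_num)).differentiableAt (by norm_num)
  have hd1 : DifferentiableAt ℝ (fderiv ℝ h) v :=
    (hC.fderiv_right (m := 2) (by norm_num)).differentiableAt (by norm_num)
  have hca : HasFDerivAt (fun x => fderiv ℝ (fderiv ℝ h) x a)
      ((fderiv ℝ (fderiv ℝ h) v).comp (0 : E →L[ℝ] E) +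
        (fderiv ℝ (fderiv ℝ (fderiv ℝ h)) v).flip a) v :=
    hd2.hasFDerivAt.clm_apply (hasFDerivAt_const a v)
  have hG : HasFDerivAt (fun x => fderiv ℝ (fderiv ℝ h) x a x)
      ((fderiv ℝ (fderiv ℝ h) v a).comp (ContinuousLinearMap.id ℝ E) +
        ((fderiv ℝ (fderiv ℝ h) v).comp (0 : E →L[ℝ] E) +
          (fderiv ℝ (fderiv ℝ (fderiv ℝ h)) v).flip a).flip v) v :=
    hca.clm_apply (hasFDerivAt_id v)
  have hKa : HasFDerivAt (fun x => fderiv ℝ h x a)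
      ((fderiv ℝ h v).comp (0 : E →L[ℝ] E) + (fderiv ℝ (fderiv ℝ h) v).flip a) v :=
    hd1.hasFDerivAt.clm_apply (hasFDerivAt_const a v)
  have hK : HasFDerivAt (fun x => (k - 1) * fderiv ℝ h x a)
      ((k - 1) • ((fderiv ℝ h v).comp (0 : E →L[ℝ] E) +
        (fderiv ℝ (fderiv ℝ h) v).flip a)) v :=
    hKa.const_mul (k - 1)
  have hev : (fun x => (k - 1) * fderiv ℝ h x a) =ᶠ[nhds v]
      (fun x => fderiv ℝ (fderiv ℝ h) x a x) := by
    filter_upwards [hmem] with y hy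
    exact (euler2_aux hf hhom hy a).symm
  have heq := (hG.congr_of_eventuallyEq hev).unique hK
  have h5 := DFunLike.congr_fun heq b
  simp only [ContinuousLinearMap.add_apply, ContinuousLinearMap.coe_comp',
    Function.comp_apply, ContinuousLinearMap.coe_id', id_eq,
    ContinuousLinearMap.zero_apply, map_zero, ContinuousLinearMap.flip_apply,
    ContinuousLinearMap.smul_apply, smul_eq_mul, zero_add, add_zero, zero_mul] at h5
  linarith

theorem sym23_aux {h : E → ℝ}
    (hf : ContDiffOn ℝ 3 h {x : E | x ≠ 0})
    {v : E} (hv : v ≠ 0) (c a b : E) :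
    fderiv ℝ (fderiv ℝ (fderiv ℝ h)) v c a b
      = fderiv ℝ (fderiv ℝ (fderiv ℝ h)) v c b a := by
  have hop : IsOpen {y : E | y ≠ 0} := isOpen_ne
  have hmem : {y : E | y ≠ 0} ∈ nhds v := hop.mem_nhds hv
  have hC : ContDiffAt ℝ 3 h v := (hf v hv).contDiffAt hmem
  have hd2 : DifferentiableAt ℝ (fderiv ℝ (fderiv ℝ h)) v :=
    ((hC.fderiv_right (m := 2) (by norm_num)).fderiv_right (m := 1)
      (by norm_num)).differentiableAt (by norm_num)
  have key : ∀ p q : E, HasFDerivAt (fun x => fderiv ℝ (fderiv ℝ h) x p q)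
      ((((fderiv ℝ (fderiv ℝ h) v p)).comp (0 : E →L[ℝ] E)) +
        ((fderiv ℝ (fderiv ℝ h) v).comp (0 : E →L[ℝ] E) +
          (fderiv ℝ (fderiv ℝ (fderiv ℝ h)) v).flip p).flip q) v := by
    intro p q
    exact (hd2.hasFDerivAt.clm_apply (hasFDerivAt_const p v)).clm_apply
      (hasFDerivAt_const q v)
  have hev : (fun x => fderiv ℝ (fderiv ℝ h) x a b) =ᶠ[nhds v]
      (fun x => fderiv ℝ (fderiv ℝ h) x b a) := by
    filter_upwards [hmem] with y hy
    have hCy : ContDiffAt ℝ 3 h y := (hf y hy).contDiffAt (hop.mem_nhds hy)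
    exact (hCy.isSymmSndFDerivAt (by norm_num)).eq a b
  have heq := ((key b a).congr_of_eventuallyEq hev).unique (key a b)
  have h5 := DFunLike.congr_fun heq c
  simpa only [ContinuousLinearMap.add_apply, ContinuousLinearMap.coe_comp',
    Function.comp_apply, ContinuousLinearMap.zero_apply, map_zero,
    ContinuousLinearMap.flip_apply, zero_add, add_zero] using h5.symm

end EulerAux

/-- First partial derivative of `h : ℝ² → ℝ` in the `i`-th coordinate direction. -/
noncomputable def pd1 (h : (Fin 2 → ℝ) → ℝ) (i : Fin 2) (x : Fin 2 → ℝ) : ℝ :=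
  fderiv ℝ h x (Pi.single i 1)

/-- Second partial derivative of `h : ℝ² → ℝ`. -/
noncomputable def pd2 (h : (Fin 2 → ℝ) → ℝ) (i j : Fin 2) (x : Fin 2 → ℝ) : ℝ :=
  iteratedFDeriv ℝ 2 h x ![Pi.single i 1, Pi.single j 1]

/-- Third partial derivative of `h : ℝ² → ℝ`. -/
noncomputable def pd3 (h : (Fin 2 → ℝ) → ℝ) (i j m : Fin 2) (x : Fin 2 → ℝ) : ℝ :=
  iteratedFDeriv ℝ 3 h x ![Pi.single i 1, Pi.single j 1, Pi.single m 1]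

/-- The relative invariant `K₂(h) = (1/2)(h₁₁h₂² − 2h₁₂h₁h₂ + h₂₂h₁²)` of binary forms. -/
noncomputable def K2 (h : (Fin 2 → ℝ) → ℝ) (x : Fin 2 → ℝ) : ℝ :=
  (1 / 2) * (pd2 h 0 0 x * (pd1 h 1 x) ^ 2 - 2 * pd2 h 0 1 x * pd1 h 0 x * pd1 h 1 x +
    pd2 h 1 1 x * (pd1 h 0 x) ^ 2)

/-- The relative invariant `K₃(h) = (1/6)(h₁₁₁h₂³ − 3h₁₁₂h₂²h₁ + 3h₁₂₂h₂h₁² − h₂₂₂h₁³)`. -/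
noncomputable def K3 (h : (Fin 2 → ℝ) → ℝ) (x : Fin 2 → ℝ) : ℝ :=
  (1 / 6) * (pd3 h 0 0 0 x * (pd1 h 1 x) ^ 3 -
    3 * pd3 h 0 0 1 x * (pd1 h 1 x) ^ 2 * pd1 h 0 x +
    3 * pd3 h 0 1 1 x * pd1 h 1 x * (pd1 h 0 x) ^ 2 -
    pd3 h 1 1 1 x * (pd1 h 0 x) ^ 3)

set_option maxHeartbeats 1000000 in
/-- The paper's computation `Θ₃⁰ = (K₃/(ku)³)·ρ³` combined with the splitting of `Θ₃` along
`ker Θ₁` and the radial direction, for binary forms of degree `k`. -/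
theorem third_differential_binary_form (k : ℝ) (h : (Fin 2 → ℝ) → ℝ)
    (hf : ContDiffOn ℝ 3 h {x | x ≠ 0})
    (hhom : ∀ t : ℝ, 0 < t → ∀ x : Fin 2 → ℝ, x ≠ 0 → h (t • x) = t ^ k * h x)
    (v : Fin 2 → ℝ) (hv : v ≠ 0) (hkh : k * h v ≠ 0) (X : Fin 2 → ℝ) :
    iteratedFDeriv ℝ 3 h v ![X, X, X] =
      (6 * K3 h v / (k * h v) ^ 3) * (v 1 * X 0 - v 0 * X 1) ^ 3 +
      (6 * (k - 2) * K2 h v / (k * h v) ^ 3) * (v 1 * X 0 - v 0 * X 1) ^ 2 *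
        fderiv ℝ h v X +
      ((k - 1) * (k - 2) / (k * h v) ^ 2) * (fderiv ℝ h v X) ^ 3 := by
  have hop : IsOpen {y : Fin 2 → ℝ | y ≠ 0} := isOpen_ne
  have hC : ContDiffAt ℝ 3 h v := (hf v hv).contDiffAt (hop.mem_nhds hv)
  set e0 : Fin 2 → ℝ := Pi.single 0 1 with he0
  set e1 : Fin 2 → ℝ := Pi.single 1 1 with he1
  set T1 := fderiv ℝ h v with hT1
  set T2 := fderiv ℝ (fderiv ℝ h) v with hT2
  set T3 := fderiv ℝ (fderiv ℝ (fderiv ℝ h)) v with hT3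
  have h3app : ∀ a b c : Fin 2 → ℝ, iteratedFDeriv ℝ 3 h v ![a, b, c] = T3 a b c := by
    intro a b c
    rw [hT3, iteratedFDeriv_succ_apply_right (n := 2), iteratedFDeriv_two_apply]
    simp [Fin.init, Fin.last]
  have h2app : ∀ a b : Fin 2 → ℝ, iteratedFDeriv ℝ 2 h v ![a, b] = T2 a b := by
    intro a b
    rw [hT2, iteratedFDeriv_two_apply]
    simp
  have hbasis : ∀ y : Fin 2 → ℝ, y = y 0 • e0 + y 1 • e1 := by
    intro y; funext i; fin_cases i <;> simp [he0, he1, Pi.single_apply]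
  have hdall : ∀ x : Fin 2 → ℝ, x ≠ 0 → DifferentiableAt ℝ h x := fun x hx =>
    ((hf x hx).contDiffAt (hop.mem_nhds hx)).differentiableAt (by norm_num)
  have E1 : T1 v = k * h v := by rw [hT1]; exact euler_aux hdall hhom hv
  have E2 : ∀ a, T2 a v = (k - 1) * T1 a := by
    intro a; rw [hT1, hT2]; exact euler2_aux hf hhom hv a
  have f2sym : ∀ a b, T2 a b = T2 b a := by
    intro a b; rw [hT2]; exact (hC.isSymmSndFDerivAt (by norm_num)).eq a b
  have E3 : ∀ a b, T3 b a v = (k - 2) * T2 a b := by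
    intro a b
    have h1 := euler3_aux hf hhom hv a b
    rw [← hT2, ← hT3] at h1
    have h2 := f2sym a b
    linear_combination h1 + (1 - k) * h2
  have sym23 : ∀ c a b, T3 c a b = T3 c b a := by
    intro c a b; rw [hT3]; exact sym23_aux hf hv c a b
  have sym12 : ∀ a b c, T3 a b c = T3 b a c := by
    intro a b c
    rw [hT3]
    exact DFunLike.congr_fun
      (((hC.fderiv_right (m := 2) (by norm_num)).isSymmSndFDerivAt (by norm_num)).eq a b) c
  set p := pd1 h 0 v with hp
  set q := pd1 h 1 v with hq
  have hpe : T1 e0 = p := rfl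
  have hqe : T1 e1 = q := rfl
  have hT1exp : ∀ y : Fin 2 → ℝ, T1 y = y 0 * p + y 1 * q := by
    intro y
    conv_lhs => rw [hbasis y]
    rw [map_add, map_smul, map_smul, hpe, hqe]
    simp [smul_eq_mul]
  set w : Fin 2 → ℝ := q • e0 - p • e1 with hw
  have hT1w : T1 w = 0 := by
    rw [hw, map_sub, map_smul, map_smul, hpe, hqe]
    simp only [smul_eq_mul]
    ring
  have hpd200 : pd2 h 0 0 v = T2 e0 e0 := h2app e0 e0
  have hpd201 : pd2 h 0 1 v = T2 e0 e1 := h2app e0 e1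
  have hpd211 : pd2 h 1 1 v = T2 e1 e1 := h2app e1 e1
  have hpd3000 : pd3 h 0 0 0 v = T3 e0 e0 e0 := h3app e0 e0 e0
  have hpd3001 : pd3 h 0 0 1 v = T3 e0 e0 e1 := h3app e0 e0 e1
  have hpd3011 : pd3 h 0 1 1 v = T3 e0 e1 e1 := h3app e0 e1 e1
  have hpd3111 : pd3 h 1 1 1 v = T3 e1 e1 e1 := h3app e1 e1 e1
  have hK2v : K2 h v = (1/2) * (T2 e0 e0 * q^2 - 2 * T2 e0 e1 * p * q + T2 e1 e1 * p^2) := by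
    rw [K2, hpd200, hpd201, hpd211, ← hp, ← hq]
  have hK3v : K3 h v = (1/6) * (T3 e0 e0 e0 * q^3 - 3 * T3 e0 e0 e1 * q^2 * p
      + 3 * T3 e0 e1 e1 * q * p^2 - T3 e1 e1 e1 * p^3) := by
    rw [K3, hpd3000, hpd3001, hpd3011, hpd3111, ← hp, ← hq]
  have hce : k * h v = v 0 * p + v 1 * q := by rw [← E1, hT1exp]
  have hDexp : T1 X = X 0 * p + X 1 * q := hT1exp X
  have hw0 : w 0 = q := by rw [hw]; simp [he0, he1]
  have hw1 : w 1 = -p := by rw [hw]; simp [he0, he1]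
  set ρ := v 1 * X 0 - v 0 * X 1 with hρ
  set D := T1 X with hDD
  have hXc : (k * h v) • X = ρ • w + D • v := by
    funext i
    fin_cases i
    · show (k * h v) * X 0 = ρ * w 0 + D * v 0
      rw [hw0]
      linear_combination X 0 * hce + (-q) * hρ + (-(v 0)) * hDexp
    · show (k * h v) * X 1 = ρ * w 1 + D * v 1
      rw [hw1]
      linear_combination X 1 * hce + p * hρ + (-(v 1)) * hDexp
  have cube : (k * h v)^3 * T3 X X X = T3 ((k * h v) • X) ((k * h v) • X) ((k * h v) • X) := by
    simp only [map_smul, ContinuousLinearMap.smul_apply, smul_eq_mul]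
    ring
  have expand8 : T3 (ρ • w + D • v) (ρ • w + D • v) (ρ • w + D • v)
      = ρ^3 * T3 w w w + ρ^2 * D * T3 w w v + ρ^2 * D * T3 w v w + ρ^2 * D * T3 v w w
        + ρ * D^2 * T3 w v v + ρ * D^2 * T3 v w v + ρ * D^2 * T3 v v w + D^3 * T3 v v v := by
    simp only [map_add, map_smul, ContinuousLinearMap.add_apply,
      ContinuousLinearMap.smul_apply, smul_eq_mul]
    ring
  have tvvv : T3 v v v = (k - 2) * ((k - 1) * (k * h v)) := by rw [E3 v v, E2 v, E1]
  have twvv : T3 w v v = 0 := by rw [E3 v w, f2sym v w, E2 w, hT1w]; ring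
  have tvwv : T3 v w v = 0 := by rw [E3 w v, E2 w, hT1w]; ring
  have tvvw : T3 v v w = 0 := by rw [sym23 v v w]; exact tvwv
  have twwv : T3 w w v = (k - 2) * T2 w w := E3 w w
  have twvw : T3 w v w = (k - 2) * T2 w w := by rw [sym23 w v w]; exact twwv
  have tvww : T3 v w w = (k - 2) * T2 w w := by rw [sym12 v w w]; exact twvw
  have hW2 : T2 w w = 2 * K2 h v := by
    rw [hK2v, hw]
    simp only [map_sub, map_smul, ContinuousLinearMap.sub_apply,
      ContinuousLinearMap.smul_apply, smul_eq_mul]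
    rw [f2sym e1 e0]
    ring
  have r1 : T3 e0 e1 e0 = T3 e0 e0 e1 := sym23 e0 e1 e0
  have r2 : T3 e1 e0 e0 = T3 e0 e0 e1 := by rw [sym12 e1 e0 e0]; exact r1
  have r3 : T3 e1 e0 e1 = T3 e0 e1 e1 := sym12 e1 e0 e1
  have r4 : T3 e1 e1 e0 = T3 e0 e1 e1 := by rw [sym23 e1 e1 e0]; exact r3
  have hW3 : T3 w w w = 6 * K3 h v := by
    rw [hK3v, hw]
    simp only [map_sub, map_smul, ContinuousLinearMap.sub_apply,
      ContinuousLinearMap.smul_apply, smul_eq_mul]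
    rw [r1, r2, r3, r4]
    ring
  have main : (k * h v)^3 * T3 X X X
      = 6 * K3 h v * ρ^3 + 6 * (k - 2) * K2 h v * ρ^2 * D
        + (k - 1) * (k - 2) * (k * h v) * D^3 := by
    rw [cube, hXc, expand8, tvvv, twvv, tvwv, tvvw, twwv, twvw, tvww, hW2, hW3]
    ring
  rw [h3app X X X]
  have hc3 : (k * h v)^3 ≠ 0 := pow_ne_zero _ hkh
  have hfin : T3 X X X = (6 * K3 h v * ρ^3 + 6 * (k - 2) * K2 h v * ρ^2 * D
      + (k - 1) * (k - 2) * (k * h v) * D^3) / (k * h v)^3 := by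
    rw [eq_div_iff hc3]
    linear_combination main
  rw [hfin]
  field_simp
end

section
/- Let h : ℝ² → ℝ be C³, let A : ℝ² → ℝ² be an invertible linear map, and let x ∈ ℝ² be a point with K₂(h)(A x) ≠ 0. Then J₃(h ∘ A)(x) = J₃(h)(A x), where J₃(h) = K₃(h)² / K₂(h)³. Together with J₀(h) = h, the function J₃ is a differential invariant of binary forms under the general linear group. -/
/-- The paper's differential invariant `J₃(h) = K₃(h)²/K₂(h)³` of binary forms. -/
noncomputable def J3 (h : (Fin 2 → ℝ) → ℝ) (x : Fin 2 → ℝ) : ℝ :=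
  (K3 h x) ^ 2 / (K2 h x) ^ 3


noncomputable section J3AuxSec

/-- basis vectors -/
def ee (i : Fin 2) : Fin 2 → ℝ := Pi.single i 1

lemma vec_decomp (u : Fin 2 → ℝ) : u = u 0 • ee 0 + u 1 • ee 1 := by
  funext i; fin_cases i <;> simp [ee]

lemma upd2_0 (u v w : Fin 2 → ℝ) : Function.update ![u, v] 0 w = ![w, v] := by
  funext i; fin_cases i <;> simp
lemma upd2_1 (u v w : Fin 2 → ℝ) : Function.update ![u, v] 1 w = ![u, w] := by
  funext i; fin_cases i <;> simp

lemma bilin (f : ContinuousMultilinearMap ℝ (fun _ : Fin 2 => (Fin 2 → ℝ)) ℝ)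
    (u v : Fin 2 → ℝ) :
    f ![u, v] = u 0 * v 0 * f ![ee 0, ee 0] + u 0 * v 1 * f ![ee 0, ee 1]
      + u 1 * v 0 * f ![ee 1, ee 0] + u 1 * v 1 * f ![ee 1, ee 1] := by
  have L : ∀ (v' z z' : Fin 2 → ℝ) (c d : ℝ),
      f ![c • z + d • z', v'] = c * f ![z, v'] + d * f ![z', v'] := by
    intro v' z z' c d
    have h1 := f.map_update_add ![z, v'] 0 (c • z) (d • z')
    have h2 := f.map_update_smul ![z, v'] 0 c z
    have h3 := f.map_update_smul ![z', v'] 0 d z'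
    rw [upd2_0] at h1 h2
    rw [upd2_0] at h1 h3
    rw [upd2_0] at h1
    rw [h1, h2, h3]; simp [upd2_0, upd2_1, smul_eq_mul]
  have R : ∀ (u' z z' : Fin 2 → ℝ) (c d : ℝ),
      f ![u', c • z + d • z'] = c * f ![u', z] + d * f ![u', z'] := by
    intro u' z z' c d
    have h1 := f.map_update_add ![u', z] 1 (c • z) (d • z')
    have h2 := f.map_update_smul ![u', z] 1 c z
    have h3 := f.map_update_smul ![u', z'] 1 d z'
    rw [upd2_1] at h1 h2
    rw [upd2_1] at h1 h3
    rw [upd2_1] at h1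
    rw [h1, h2, h3]; simp [upd2_0, upd2_1, smul_eq_mul]
  calc f ![u, v] = f ![u 0 • ee 0 + u 1 • ee 1, v] := by rw [← vec_decomp]
    _ = u 0 * f ![ee 0, v] + u 1 * f ![ee 1, v] := L v (ee 0) (ee 1) (u 0) (u 1)
    _ = _ := by
        rw [show f ![ee 0, v] = f ![ee 0, v 0 • ee 0 + v 1 • ee 1] by rw [← vec_decomp],
          show f ![ee 1, v] = f ![ee 1, v 0 • ee 0 + v 1 • ee 1] by rw [← vec_decomp],
          R (ee 0) (ee 0) (ee 1) (v 0) (v 1), R (ee 1) (ee 0) (ee 1) (v 0) (v 1)]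
        ring

end J3AuxSec
noncomputable section J3AuxSec2

lemma upd3_0 (u v w z : Fin 2 → ℝ) : Function.update ![u, v, w] 0 z = ![z, v, w] := by
  funext i; fin_cases i <;> simp
lemma upd3_1 (u v w z : Fin 2 → ℝ) : Function.update ![u, v, w] 1 z = ![u, z, w] := by
  funext i; fin_cases i <;> simp
lemma upd3_2 (u v w z : Fin 2 → ℝ) : Function.update ![u, v, w] 2 z = ![u, v, z] := by
  funext i; fin_cases i <;> simp

lemma trilin (f : ContinuousMultilinearMap ℝ (fun _ : Fin 3 => (Fin 2 → ℝ)) ℝ)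
    (u v w : Fin 2 → ℝ) :
    f ![u, v, w] =
      u 0 * v 0 * w 0 * f ![ee 0, ee 0, ee 0] + u 0 * v 0 * w 1 * f ![ee 0, ee 0, ee 1]
      + u 0 * v 1 * w 0 * f ![ee 0, ee 1, ee 0] + u 0 * v 1 * w 1 * f ![ee 0, ee 1, ee 1]
      + u 1 * v 0 * w 0 * f ![ee 1, ee 0, ee 0] + u 1 * v 0 * w 1 * f ![ee 1, ee 0, ee 1]
      + u 1 * v 1 * w 0 * f ![ee 1, ee 1, ee 0] + u 1 * v 1 * w 1 * f ![ee 1, ee 1, ee 1] := by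
  have L0 : ∀ (p q z z' : Fin 2 → ℝ) (c d : ℝ),
      f ![c • z + d • z', p, q] = c * f ![z, p, q] + d * f ![z', p, q] := by
    intro p q z z' c d
    have h1 := f.map_update_add ![z, p, q] 0 (c • z) (d • z')
    have h2 := f.map_update_smul ![z, p, q] 0 c z
    have h3 := f.map_update_smul ![z', p, q] 0 d z'
    rw [upd3_0] at h1 h2
    rw [upd3_0] at h1 h3
    rw [upd3_0] at h1
    rw [h1, h2, h3]; simp [upd3_0, smul_eq_mul]
  have L1 : ∀ (p q z z' : Fin 2 → ℝ) (c d : ℝ),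
      f ![p, c • z + d • z', q] = c * f ![p, z, q] + d * f ![p, z', q] := by
    intro p q z z' c d
    have h1 := f.map_update_add ![p, z, q] 1 (c • z) (d • z')
    have h2 := f.map_update_smul ![p, z, q] 1 c z
    have h3 := f.map_update_smul ![p, z', q] 1 d z'
    rw [upd3_1] at h1 h2
    rw [upd3_1] at h1 h3
    rw [upd3_1] at h1
    rw [h1, h2, h3]; simp [upd3_1, smul_eq_mul]
  have L2 : ∀ (p q z z' : Fin 2 → ℝ) (c d : ℝ),
      f ![p, q, c • z + d • z'] = c * f ![p, q, z] + d * f ![p, q, z'] := by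
    intro p q z z' c d
    have h1 := f.map_update_add ![p, q, z] 2 (c • z) (d • z')
    have h2 := f.map_update_smul ![p, q, z] 2 c z
    have h3 := f.map_update_smul ![p, q, z'] 2 d z'
    rw [upd3_2] at h1 h2
    rw [upd3_2] at h1 h3
    rw [upd3_2] at h1
    rw [h1, h2, h3]; simp [upd3_2, smul_eq_mul]
  calc f ![u, v, w] = f ![u 0 • ee 0 + u 1 • ee 1, v, w] := by rw [← vec_decomp]
    _ = u 0 * f ![ee 0, v, w] + u 1 * f ![ee 1, v, w] := L0 v w (ee 0) (ee 1) (u 0) (u 1)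
    _ = u 0 * (v 0 * f ![ee 0, ee 0, w] + v 1 * f ![ee 0, ee 1, w])
        + u 1 * (v 0 * f ![ee 1, ee 0, w] + v 1 * f ![ee 1, ee 1, w]) := by
        rw [show f ![ee 0, v, w] = f ![ee 0, v 0 • ee 0 + v 1 • ee 1, w] by rw [← vec_decomp],
          show f ![ee 1, v, w] = f ![ee 1, v 0 • ee 0 + v 1 • ee 1, w] by rw [← vec_decomp],
          L1 (ee 0) w (ee 0) (ee 1) (v 0) (v 1), L1 (ee 1) w (ee 0) (ee 1) (v 0) (v 1)]
    _ = _ := by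
        rw [show f ![ee 0, ee 0, w] = f ![ee 0, ee 0, w 0 • ee 0 + w 1 • ee 1] by rw [← vec_decomp],
          show f ![ee 0, ee 1, w] = f ![ee 0, ee 1, w 0 • ee 0 + w 1 • ee 1] by rw [← vec_decomp],
          show f ![ee 1, ee 0, w] = f ![ee 1, ee 0, w 0 • ee 0 + w 1 • ee 1] by rw [← vec_decomp],
          show f ![ee 1, ee 1, w] = f ![ee 1, ee 1, w 0 • ee 0 + w 1 • ee 1] by rw [← vec_decomp],
          L2 (ee 0) (ee 0) (ee 0) (ee 1) (w 0) (w 1), L2 (ee 0) (ee 1) (ee 0) (ee 1) (w 0) (w 1),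
          L2 (ee 1) (ee 0) (ee 0) (ee 1) (w 0) (w 1), L2 (ee 1) (ee 1) (ee 0) (ee 1) (w 0) (w 1)]
        ring

end J3AuxSec2
noncomputable section J3AuxSec3

lemma sym2' {h : (Fin 2 → ℝ) → ℝ} (hh : ContDiff ℝ 3 h) (z v w : Fin 2 → ℝ) :
    iteratedFDeriv ℝ 2 h z ![v, w] = iteratedFDeriv ℝ 2 h z ![w, v] := by
  rw [iteratedFDeriv_two_apply, iteratedFDeriv_two_apply]
  simp only [Matrix.cons_val_zero, Matrix.cons_val_one, Matrix.head_cons]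
  exact (hh.contDiffAt.isSymmSndFDerivAt (by norm_num)).eq v w

lemma sym3_23 {h : (Fin 2 → ℝ) → ℝ} (hh : ContDiff ℝ 3 h) (z u v w : Fin 2 → ℝ) :
    iteratedFDeriv ℝ 3 h z ![u, v, w] = iteratedFDeriv ℝ 3 h z ![u, w, v] := by
  rw [iteratedFDeriv_succ_apply_left, iteratedFDeriv_succ_apply_left]
  have ht1 : Fin.tail ![u, v, w] = ![v, w] := by funext i; fin_cases i <;> rfl
  have ht2 : Fin.tail ![u, w, v] = ![w, v] := by funext i; fin_cases i <;> rfl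
  have h0 : (![u, v, w] : Fin 3 → Fin 2 → ℝ) 0 = u := rfl
  have h0' : (![u, w, v] : Fin 3 → Fin 2 → ℝ) 0 = u := rfl
  rw [ht1, ht2, h0, h0']
  have hdiff : DifferentiableAt ℝ (iteratedFDeriv ℝ 2 h) z :=
    (hh.differentiable_iteratedFDeriv (by norm_num)).differentiableAt
  rw [← fderiv_continuousMultilinear_apply_const_apply hdiff,
    ← fderiv_continuousMultilinear_apply_const_apply hdiff]
  have : (fun y => iteratedFDeriv ℝ 2 h y ![v, w]) = fun y => iteratedFDeriv ℝ 2 h y ![w, v] :=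
    funext fun y => sym2' hh y v w
  rw [this]

lemma iter3_eq {h : (Fin 2 → ℝ) → ℝ} (z u v w : Fin 2 → ℝ) :
    iteratedFDeriv ℝ 3 h z ![u, v, w] = fderiv ℝ (fderiv ℝ (fderiv ℝ h)) z u v w := by
  rw [iteratedFDeriv_succ_apply_right]
  have hi1 : Fin.init ![u, v, w] = ![u, v] := by funext i; fin_cases i <;> rfl
  have hl1 : (![u, v, w] : Fin 3 → Fin 2 → ℝ) (Fin.last 2) = w := rfl
  rw [hi1, hl1, iteratedFDeriv_two_apply]
  simp only [Matrix.cons_val_zero, Matrix.cons_val_one, Matrix.head_cons]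

lemma sym3_12 {h : (Fin 2 → ℝ) → ℝ} (hh : ContDiff ℝ 3 h) (z u v w : Fin 2 → ℝ) :
    iteratedFDeriv ℝ 3 h z ![u, v, w] = iteratedFDeriv ℝ 3 h z ![v, u, w] := by
  rw [iter3_eq, iter3_eq]
  have hg : ContDiff ℝ 2 (fderiv ℝ h) := hh.fderiv_right (by norm_num)
  have hs := ((hg.contDiffAt (x := z)).isSymmSndFDerivAt (by simp)).eq u v
  exact DFunLike.congr_fun hs w

end J3AuxSec3
noncomputable section J3MainSec

theorem J3_invariance' (h : (Fin 2 → ℝ) → ℝ) (hh : ContDiff ℝ 3 h)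
    (A : (Fin 2 → ℝ) →ₗ[ℝ] (Fin 2 → ℝ)) (hA : LinearMap.det A ≠ 0)
    (x : Fin 2 → ℝ) :
    K2 (fun y => h (A y)) x = (LinearMap.det A) ^ 2 * K2 h (A x) ∧
    K3 (fun y => h (A y)) x = (LinearMap.det A) ^ 3 * K3 h (A x) := by
  classical
  set B : (Fin 2 → ℝ) →L[ℝ] (Fin 2 → ℝ) := LinearMap.toContinuousLinearMap A with hBdef
  have hBA : ∀ y, B y = A y := fun y => rfl
  have hgB : (fun y => h (A y)) = h ∘ B := rfl
  have hc : ∀ (i : ℕ), (i : WithTop ℕ∞) ≤ 3 → iteratedFDeriv ℝ i (h ∘ B) x =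
      (iteratedFDeriv ℝ i h (A x)).compContinuousLinearMap fun _ => B := fun i hi =>
    B.iteratedFDeriv_comp_right hh x hi
  -- first derivatives
  have hg1 : ∀ i : Fin 2, pd1 (fun y => h (A y)) i x
      = A (Pi.single i 1) 0 * pd1 h 0 (A x) + A (Pi.single i 1) 1 * pd1 h 1 (A x) := by
    intro i
    have hd : DifferentiableAt ℝ h (B x) := (hh.differentiable (by norm_num)).differentiableAt
    have hfd : fderiv ℝ (h ∘ B) x = (fderiv ℝ h (B x)).comp B := by
      rw [fderiv_comp x hd B.differentiableAt, B.fderiv]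
    simp only [pd1, hgB, hfd, ContinuousLinearMap.coe_comp', Function.comp_apply]
    rw [hBA, hBA]
    conv_lhs => rw [vec_decomp (A (Pi.single i 1))]
    rw [map_add, map_smul, map_smul]
    simp only [ee, smul_eq_mul]
  -- second derivatives
  have hg2 : ∀ i j : Fin 2, pd2 (fun y => h (A y)) i j x
      = A (Pi.single i 1) 0 * A (Pi.single j 1) 0 * pd2 h 0 0 (A x)
        + (A (Pi.single i 1) 0 * A (Pi.single j 1) 1
            + A (Pi.single i 1) 1 * A (Pi.single j 1) 0) * pd2 h 0 1 (A x)
        + A (Pi.single i 1) 1 * A (Pi.single j 1) 1 * pd2 h 1 1 (A x) := by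
    intro i j
    have h2 := hc 2 (by norm_num)
    simp only [pd2, hgB, h2, ContinuousMultilinearMap.compContinuousLinearMap_apply]
    have harg : (fun k => B (![Pi.single i 1, Pi.single j 1] k))
        = ![A (Pi.single i 1), A (Pi.single j 1)] := by
      funext k; fin_cases k <;> exact hBA _
    rw [harg, bilin, sym2' hh (A x) (ee 1) (ee 0)]
    simp only [ee]
    ring
  -- third derivatives
  have hg3 : ∀ i j k : Fin 2, pd3 (fun y => h (A y)) i j k x
      = A (Pi.single i 1) 0 * A (Pi.single j 1) 0 * A (Pi.single k 1) 0 * pd3 h 0 0 0 (A x)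
        + (A (Pi.single i 1) 0 * A (Pi.single j 1) 0 * A (Pi.single k 1) 1
            + A (Pi.single i 1) 0 * A (Pi.single j 1) 1 * A (Pi.single k 1) 0
            + A (Pi.single i 1) 1 * A (Pi.single j 1) 0 * A (Pi.single k 1) 0) * pd3 h 0 0 1 (A x)
        + (A (Pi.single i 1) 0 * A (Pi.single j 1) 1 * A (Pi.single k 1) 1
            + A (Pi.single i 1) 1 * A (Pi.single j 1) 0 * A (Pi.single k 1) 1
            + A (Pi.single i 1) 1 * A (Pi.single j 1) 1 * A (Pi.single k 1) 0) * pd3 h 0 1 1 (A x)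
        + A (Pi.single i 1) 1 * A (Pi.single j 1) 1 * A (Pi.single k 1) 1 * pd3 h 1 1 1 (A x) := by
    intro i j k
    have h3 := hc 3 (by norm_num)
    simp only [pd3, hgB, h3, ContinuousMultilinearMap.compContinuousLinearMap_apply]
    have harg : (fun l => B (![Pi.single i 1, Pi.single j 1, Pi.single k 1] l))
        = ![A (Pi.single i 1), A (Pi.single j 1), A (Pi.single k 1)] := by
      funext l; fin_cases l <;> exact hBA _
    rw [harg, trilin]
    rw [sym3_12 hh (A x) (ee 1) (ee 0) (ee 0)]
    rw [sym3_23 hh (A x) (ee 0) (ee 1) (ee 0)]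
    rw [sym3_23 hh (A x) (ee 1) (ee 1) (ee 0)]
    rw [sym3_12 hh (A x) (ee 1) (ee 0) (ee 1)]
    simp only [ee]
    ring
  have hdet : LinearMap.det A = A (Pi.single 0 1) 0 * A (Pi.single 1 1) 1
      - A (Pi.single 0 1) 1 * A (Pi.single 1 1) 0 := by
    rw [← LinearMap.det_toMatrix (Pi.basisFun ℝ (Fin 2)) A, Matrix.det_fin_two]
    simp [LinearMap.toMatrix_apply]
    ring
  constructor
  · simp only [K2, hg1, hg2, hdet]; ring
  · simp only [K3, hg1, hg3, hdet]; ring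

end J3MainSec
/-- `J₃ = K₃²/K₂³` is a differential invariant of binary forms under the general linear
group: `J₃(h∘A)(x) = J₃(h)(Ax)` for every invertible linear `A` and `K₂(h)(Ax) ≠ 0`. -/
theorem J3_invariance (h : (Fin 2 → ℝ) → ℝ) (hh : ContDiff ℝ 3 h)
    (A : (Fin 2 → ℝ) →ₗ[ℝ] (Fin 2 → ℝ)) (hA : LinearMap.det A ≠ 0)
    (x : Fin 2 → ℝ) (hx : K2 h (A x) ≠ 0) :
    J3 (fun y => h (A y)) x = J3 h (A x) := by
  have key := J3_invariance' h hh A hA x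
  simp only [J3, key.1, key.2, mul_pow, ← pow_mul]
  rw [mul_div_mul_left _ _ (pow_ne_zero 6 hA)]
end
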